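/- Let α ∈ (0,1), s ≥ 1, and f ∈ E_{s-1} (zero-average values, weight e^{αt}). Define u(t) = ∫_0^t e^{(t-τ)Δ} f(τ) dτ. Then u ∈ E_s and ‖u‖_{E_s} ≤ C(α) ‖f‖_{E_{s-1}}, i.e. sup_{t≥0} e^{αt} ‖u(t)‖_{H^s} ≤ C(α) sup_{t≥0} e^{αt} ‖f(t)‖_{H^{s-1}}. -/

import Mathlib

set_option maxHeartbeats 1000000

open MeasureTheory intervalIntegral

noncomputable section

/-- Euclidean norm of a lattice vector. -/
def latNorm {d : ℕ} (ξ : Fin d → ℤ) : ℝ := Real.sqrt (∑ i, ((ξ i : ℝ)) ^ 2)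

/-- Japanese bracket `⟨ξ⟩ = max (1, |ξ|)`. -/
def jb {d : ℕ} (ξ : Fin d → ℤ) : ℝ := max 1 (latNorm ξ)

/-- Euclidean norm of a vector of Fourier coefficients in `ℂ^n`. -/
def cnorm {n : ℕ} (a : Fin n → ℂ) : ℝ := Real.sqrt (∑ j, ‖a j‖ ^ 2)

/-- Sobolev `H^s` norm via Fourier coefficients. -/
def sobNorm {d n : ℕ} (s : ℝ) (u : (Fin d → ℤ) → Fin n → ℂ) : ℝ :=
  Real.sqrt (∑' ξ : Fin d → ℤ, jb ξ ^ (2 * s) * cnorm (u ξ) ^ 2)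

/-- The Duhamel integral `u(t) = ∫₀ᵗ e^{(t-τ)Δ} f(τ) dτ`, computed mode-wise. -/
def duhamel {d n : ℕ} (f : ℝ → (Fin d → ℤ) → Fin n → ℂ) (t : ℝ) :
    (Fin d → ℤ) → Fin n → ℂ :=
  fun ξ j => ∫ τ in (0 : ℝ)..t, Real.exp (-(t - τ) * latNorm ξ ^ 2) • f τ ξ j

lemma jb_nonneg {d : ℕ} (ξ : Fin d → ℤ) : 0 ≤ jb ξ :=
  le_trans zero_le_one (le_max_left _ _)

lemma jb_one_le {d : ℕ} (ξ : Fin d → ℤ) : 1 ≤ jb ξ := le_max_left _ _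

lemma cnorm_nonneg {n : ℕ} (a : Fin n → ℂ) : 0 ≤ cnorm a := Real.sqrt_nonneg _

lemma rpow_two_mul {x : ℝ} (hx : 0 ≤ x) (s : ℝ) : x ^ (2 * s) = (x ^ s) ^ 2 := by
  rw [show (2:ℝ) * s = s * 2 by ring, Real.rpow_mul hx,
    show ((2:ℝ)) = ((2:ℕ):ℝ) by norm_num, Real.rpow_natCast]

lemma intervalIntegrable_congr_uIcc {a b : ℝ} {u v : ℝ → ℝ}
    (h : ∀ x ∈ Set.uIcc a b, u x = v x) (hv : IntervalIntegrable v volume a b) :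
    IntervalIntegrable u volume a b := by
  rw [intervalIntegrable_iff] at *
  exact hv.congr_fun (fun x hx => (h x (Set.uIoc_subset_uIcc hx)).symm) measurableSet_uIoc

/-- Continuity of `cnorm ∘ f`. -/
lemma cnorm_comp_continuous {n d : ℕ} {f : ℝ → (Fin d → ℤ) → Fin n → ℂ}
    (hf : ∀ ξ j, Continuous fun τ : ℝ => f τ ξ j) (ξ : Fin d → ℤ) :
    Continuous fun τ => cnorm (f τ ξ) := by
  unfold cnorm
  exact Real.continuous_sqrt.comp
    (continuous_finset_sum _ fun j _ => ((continuous_norm.comp (hf ξ j)).pow 2))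

/-- `latNorm ξ ≥ 1` for nonzero lattice vectors. -/
lemma one_le_latNorm {d : ℕ} {ξ : Fin d → ℤ} (hξ : ξ ≠ 0) : 1 ≤ latNorm ξ := by
  obtain ⟨i, hi⟩ : ∃ i, ξ i ≠ 0 := by
    by_contra h; push_neg at h; exact hξ (funext h)
  have h1 : (1:ℝ) ≤ ((ξ i : ℝ)) ^ 2 := by
    have := Int.one_le_abs hi
    have : (1:ℝ) ≤ |(ξ i : ℝ)| := by exact_mod_cast (by push_cast; exact_mod_cast this : (1:ℝ) ≤ (|ξ i| : ℝ))
    nlinarith [abs_nonneg ((ξ i : ℝ)), sq_abs ((ξ i : ℝ))]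
  have h2 : ((ξ i : ℝ)) ^ 2 ≤ ∑ k, ((ξ k : ℝ)) ^ 2 :=
    Finset.single_le_sum (f := fun k => ((ξ k : ℝ)) ^ 2) (fun k _ => sq_nonneg _)
      (Finset.mem_univ i)
  unfold latNorm
  calc (1:ℝ) = Real.sqrt 1 := Real.sqrt_one.symm
    _ ≤ Real.sqrt (∑ k, ((ξ k : ℝ)) ^ 2) := Real.sqrt_le_sqrt (by linarith)

/-- Cauchy–Schwarz for interval integrals. -/
lemma cs_interval {a b : ℝ} (hab : a ≤ b) {φ ψ : ℝ → ℝ}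
    (h1 : IntervalIntegrable (fun x => φ x ^ 2) volume a b)
    (h2 : IntervalIntegrable (fun x => ψ x ^ 2) volume a b)
    (h3 : IntervalIntegrable (fun x => φ x * ψ x) volume a b) :
    (∫ x in a..b, φ x * ψ x) ^ 2 ≤
      (∫ x in a..b, φ x ^ 2) * (∫ x in a..b, ψ x ^ 2) := by
  set A := ∫ x in a..b, φ x ^ 2 with hA
  set B := ∫ x in a..b, φ x * ψ x with hB
  set C := ∫ x in a..b, ψ x ^ 2 with hC
  have key : ∀ x : ℝ, 0 ≤ A * (x * x) + (2 * B) * x + C := by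
    intro x
    have hint1 : IntervalIntegrable (fun τ => x ^ 2 * φ τ ^ 2) volume a b :=
      h1.const_mul _
    have hint2 : IntervalIntegrable (fun τ => (2 * x) * (φ τ * ψ τ)) volume a b :=
      h3.const_mul _
    have hval : (∫ τ in a..b, (x * φ τ + ψ τ) ^ 2)
        = x ^ 2 * A + (2 * x) * B + C := by
      rw [hA, hB, hC, ← intervalIntegral.integral_const_mul,
        ← intervalIntegral.integral_const_mul,
        ← intervalIntegral.integral_add hint1 hint2,
        ← intervalIntegral.integral_add (hint1.add hint2) h2]
      exact intervalIntegral.integral_congr fun τ _ => by ring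
    have hnn : 0 ≤ ∫ τ in a..b, (x * φ τ + ψ τ) ^ 2 :=
      intervalIntegral.integral_nonneg hab fun τ _ => sq_nonneg _
    rw [hval] at hnn
    nlinarith [hnn]
  have hd := discrim_le_zero key
  rw [discrim] at hd
  nlinarith [hd]

/-- `x e^{-c x²} ≤ (2√c)⁻¹` for `c > 0`, `x ≥ 0`. -/
lemma gauss_sup {c x : ℝ} (hc : 0 < c) (hx : 0 ≤ x) :
    x * Real.exp (-(c * x ^ 2)) ≤ (2 * Real.sqrt c)⁻¹ := by
  have hsc : 0 < Real.sqrt c := Real.sqrt_pos.2 hc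
  have hsq : Real.sqrt c ^ 2 = c := Real.sq_sqrt hc.le
  have hepos : 0 < Real.exp (c * x ^ 2) := Real.exp_pos _
  have h2s : (0:ℝ) < 2 * Real.sqrt c := by positivity
  have key : 2 * Real.sqrt c * x ≤ Real.exp (c * x ^ 2) := by
    have h2 := Real.add_one_le_exp (c * x ^ 2)
    nlinarith [sq_nonneg (1 - Real.sqrt c * x)]
  have hxle : x ≤ Real.exp (c * x ^ 2) / (2 * Real.sqrt c) := by
    rw [le_div_iff₀ h2s]; linarith [key]
  calc x * Real.exp (-(c * x ^ 2))
      = x * (Real.exp (c * x ^ 2))⁻¹ := by rw [Real.exp_neg]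
    _ ≤ (Real.exp (c * x ^ 2) / (2 * Real.sqrt c)) * (Real.exp (c * x ^ 2))⁻¹ := by
        apply mul_le_mul_of_nonneg_right hxle (by positivity)
    _ = (2 * Real.sqrt c)⁻¹ * (Real.exp (c * x ^ 2) * (Real.exp (c * x ^ 2))⁻¹) := by ring
    _ = (2 * Real.sqrt c)⁻¹ := by rw [mul_inv_cancel₀ hepos.ne', mul_one]

/-- Pointwise heat-kernel bound. -/
lemma kernel_bound {α β L r : ℝ} (hα : 0 < α) (hβ : 0 < β) (hab : α + β = 1)
    (hL : 1 ≤ L) (hr : 0 < r) :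
    L * Real.exp (-(r * L ^ 2)) ≤
      Real.exp (-((α + β / 2) * r)) * ((Real.sqrt β)⁻¹ * r ^ (-(1/2) : ℝ)) := by
  have hL0 : (0:ℝ) < L := lt_of_lt_of_le one_pos hL
  have hL2 : 1 ≤ L ^ 2 := by nlinarith
  have split : -(r * L ^ 2) = -(α * r * L ^ 2) + (-(β/2 * r * L ^ 2) + -(β/2 * r * L ^ 2)) := by
    have hα' : α = 1 - β := by linarith
    rw [hα']; ring
  have hL21 : (0:ℝ) ≤ L ^ 2 - 1 := by linarith
  have hq1 : (0:ℝ) ≤ α * r * (L ^ 2 - 1) :=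
    mul_nonneg (mul_nonneg hα.le hr.le) hL21
  have hq2 : (0:ℝ) ≤ β / 2 * r * (L ^ 2 - 1) :=
    mul_nonneg (mul_nonneg (by linarith) hr.le) hL21
  have e1 : Real.exp (-(α * r * L ^ 2)) ≤ Real.exp (-(α * r)) :=
    Real.exp_le_exp.2 (by nlinarith [hq1])
  have e2 : Real.exp (-(β/2 * r * L ^ 2)) ≤ Real.exp (-(β/2 * r)) :=
    Real.exp_le_exp.2 (by nlinarith [hq2])
  have e3 : L * Real.exp (-(β/2 * r * L ^ 2)) ≤ (2 * Real.sqrt (β/2 * r))⁻¹ := by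
    have := gauss_sup (c := β/2 * r) (x := L) (by positivity) hL0.le
    calc L * Real.exp (-(β/2 * r * L ^ 2))
        = L * Real.exp (-(β/2 * r * L ^ 2)) := rfl
      _ ≤ (2 * Real.sqrt (β/2 * r))⁻¹ := by
          have harg : β/2 * r * L ^ 2 = (β/2 * r) * L ^ 2 := by ring
          rw [harg]; exact this
  have e4 : (2 * Real.sqrt (β/2 * r))⁻¹ ≤ (Real.sqrt β)⁻¹ * r ^ (-(1/2) : ℝ) := by
    have hbr : (0:ℝ) < Real.sqrt (β * r) := Real.sqrt_pos.2 (by positivity)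
    have h2eq : 2 * Real.sqrt (β/2 * r) = Real.sqrt (4 * (β/2 * r)) := by
      rw [show (4:ℝ) * (β/2 * r) = 2 ^ 2 * (β/2 * r) by ring,
        Real.sqrt_mul (by positivity : (0:ℝ) ≤ 2 ^ 2) (β/2 * r),
        Real.sqrt_sq (by norm_num : (0:ℝ) ≤ 2)]
    have hle : Real.sqrt (β * r) ≤ 2 * Real.sqrt (β/2 * r) := by
      rw [h2eq]; exact Real.sqrt_le_sqrt (by nlinarith)
    have hinv : (2 * Real.sqrt (β/2 * r))⁻¹ ≤ (Real.sqrt (β * r))⁻¹ :=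
      inv_anti₀ hbr hle
    have heq : (Real.sqrt (β * r))⁻¹ = (Real.sqrt β)⁻¹ * r ^ (-(1/2) : ℝ) := by
      rw [Real.sqrt_mul hβ.le, mul_inv, Real.rpow_neg hr.le,
        show ((1:ℝ)/2) = (1/2 : ℝ) by norm_num, ← Real.sqrt_eq_rpow]
    rw [heq] at hinv; exact hinv
  calc L * Real.exp (-(r * L ^ 2))
      = Real.exp (-(α * r * L ^ 2)) * Real.exp (-(β/2 * r * L ^ 2)) *
        (L * Real.exp (-(β/2 * r * L ^ 2))) := by
        rw [split, Real.exp_add, Real.exp_add]; ring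
    _ ≤ Real.exp (-(α * r)) * Real.exp (-(β/2 * r)) * (2 * Real.sqrt (β/2 * r))⁻¹ := by
        apply mul_le_mul
        · exact mul_le_mul e1 e2 (Real.exp_pos _).le (Real.exp_pos _).le
        · exact e3
        · positivity
        · positivity
    _ ≤ Real.exp (-(α * r)) * Real.exp (-(β/2 * r)) * ((Real.sqrt β)⁻¹ * r ^ (-(1/2) : ℝ)) := by
        apply mul_le_mul_of_nonneg_left e4 (by positivity)
    _ = Real.exp (-((α + β / 2) * r)) * ((Real.sqrt β)⁻¹ * r ^ (-(1/2) : ℝ)) := by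
        rw [← Real.exp_add]; ring_nf

/-- Bound on `∫₀ᵗ e^{-δ r} r^{-1/2} dr`. -/
lemma J_bound {δ t : ℝ} (hδ : 0 < δ) (ht : 0 ≤ t) :
    (∫ r in (0:ℝ)..t, Real.exp (-(δ * r)) * r ^ (-(1/2) : ℝ)) ≤ 2 + 1/δ := by
  have hrpow : ∀ a b : ℝ, IntervalIntegrable (fun x : ℝ => x ^ (-(1/2) : ℝ)) volume a b :=
    fun a b => intervalIntegral.intervalIntegrable_rpow' (by norm_num)
  have hcont : Continuous fun r : ℝ => Real.exp (-(δ * r)) := by continuity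
  have hint : ∀ a b : ℝ,
      IntervalIntegrable (fun r => Real.exp (-(δ * r)) * r ^ (-(1/2) : ℝ)) volume a b :=
    fun a b => (hrpow a b).continuousOn_mul hcont.continuousOn
  have hone : ∀ t' : ℝ, 0 ≤ t' → t' ≤ 1 →
      (∫ r in (0:ℝ)..t', Real.exp (-(δ * r)) * r ^ (-(1/2) : ℝ)) ≤ 2 := by
    intro t' h0 h1
    have hmono : (∫ r in (0:ℝ)..t', Real.exp (-(δ * r)) * r ^ (-(1/2) : ℝ))
        ≤ ∫ r in (0:ℝ)..t', r ^ (-(1/2) : ℝ) := by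
      apply intervalIntegral.integral_mono_on h0 (hint 0 t') (hrpow 0 t')
      intro r hr
      have h2 : 0 ≤ r ^ (-(1/2) : ℝ) := Real.rpow_nonneg hr.1 _
      have h3 : Real.exp (-(δ * r)) ≤ 1 := by
        rw [← Real.exp_zero]
        exact Real.exp_le_exp.2 (by nlinarith [hr.1])
      nlinarith
    have hcalc : (∫ r in (0:ℝ)..t', r ^ (-(1/2) : ℝ)) = t' ^ ((1:ℝ)/2) / (1/2) := by
      rw [integral_rpow (Or.inl (by norm_num))]
      norm_num
    have hle1 : t' ^ ((1:ℝ)/2) ≤ 1 := Real.rpow_le_one h0 h1 (by norm_num)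
    rw [hcalc] at hmono
    calc (∫ r in (0:ℝ)..t', Real.exp (-(δ * r)) * r ^ (-(1/2) : ℝ))
        ≤ t' ^ ((1:ℝ)/2) / (1/2) := hmono
      _ ≤ 1 / (1/2 : ℝ) := by gcongr
      _ = 2 := by norm_num
  rcases le_or_gt t 1 with h | h
  · have := hone t ht h
    have : (0:ℝ) < 1/δ := by positivity
    linarith [hone t ht h]
  · rw [← intervalIntegral.integral_add_adjacent_intervals (hint 0 1) (hint 1 t)]
    have hA := hone 1 zero_le_one le_rfl
    have hB : (∫ r in (1:ℝ)..t, Real.exp (-(δ * r)) * r ^ (-(1/2) : ℝ)) ≤ 1/δ := by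
      have hmono : (∫ r in (1:ℝ)..t, Real.exp (-(δ * r)) * r ^ (-(1/2) : ℝ))
          ≤ ∫ r in (1:ℝ)..t, Real.exp (-(δ * r)) := by
        apply intervalIntegral.integral_mono_on h.le (hint 1 t)
          (hcont.intervalIntegrable 1 t)
        intro r hr
        have h1r : (1:ℝ) ≤ r := hr.1
        have h2 : r ^ (-(1/2) : ℝ) ≤ 1 :=
          Real.rpow_le_one_of_one_le_of_nonpos h1r (by norm_num)
        nlinarith [Real.exp_pos (-(δ * r)),
          Real.rpow_nonneg (le_trans zero_le_one h1r) (-(1/2) : ℝ)]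
      have hne : (-δ : ℝ) ≠ 0 := by linarith
      have hcalc : (∫ r in (1:ℝ)..t, Real.exp (-(δ * r)))
          = (-δ)⁻¹ * (Real.exp (-δ * t) - Real.exp (-δ * 1)) := by
        have hrw : ∀ r : ℝ, Real.exp (-(δ * r)) = Real.exp ((-δ) * r) := fun r => by ring_nf
        simp_rw [hrw]
        rw [intervalIntegral.integral_comp_mul_left Real.exp hne, integral_exp, smul_eq_mul]
      have he1 : Real.exp (-δ * 1) ≤ 1 := Real.exp_le_one_iff.2 (by linarith)
      have he2 : 0 < Real.exp (-δ * t) := Real.exp_pos _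
      have hval : (-δ)⁻¹ * (Real.exp (-δ * t) - Real.exp (-δ * 1)) ≤ 1/δ := by
        have heq : (-δ)⁻¹ * (Real.exp (-δ * t) - Real.exp (-δ * 1))
            = δ⁻¹ * (Real.exp (-δ * 1) - Real.exp (-δ * t)) := by
          rw [← neg_inv]; ring
        rw [heq, one_div]
        have : Real.exp (-δ * 1) - Real.exp (-δ * t) ≤ 1 := by linarith
        calc δ⁻¹ * (Real.exp (-δ * 1) - Real.exp (-δ * t)) ≤ δ⁻¹ * 1 :=
              mul_le_mul_of_nonneg_left this (inv_nonneg.2 hδ.le)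
          _ = δ⁻¹ := mul_one _
      rw [hcalc] at hmono
      linarith
    linarith

/-- let `α ∈ (0,1)`, `s ≥ 1`, and let `f ∈ E_{s-1}` (continuous,
zero-average values and `sup_τ e^{ατ}‖f(τ)‖_{H^{s-1}} ≤ K`). Then
`u(t) = ∫₀ᵗ e^{(t-τ)Δ} f(τ) dτ` belongs to `E_s`:
`sup_{t ≥ 0} e^{αt}‖u(t)‖_{H^s} ≤ C(α) K`. -/
theorem stmt_17 {d n : ℕ} (α : ℝ) (hα : α ∈ Set.Ioo (0 : ℝ) 1) :
    ∃ C > 0, ∀ (s : ℝ), 1 ≤ s → ∀ (f : ℝ → (Fin d → ℤ) → Fin n → ℂ) (K : ℝ),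
      (∀ (ξ : Fin d → ℤ) (j : Fin n), Continuous fun τ : ℝ => f τ ξ j) →
      (∀ τ, 0 ≤ τ → f τ 0 = 0) →
      (∀ τ, 0 ≤ τ →
        Summable fun ξ : Fin d → ℤ => jb ξ ^ (2 * (s - 1)) * cnorm (f τ ξ) ^ 2) →
      (∀ τ, 0 ≤ τ → Real.exp (α * τ) * sobNorm (s - 1) (f τ) ≤ K) →
      ∀ t : ℝ, 0 ≤ t →
        Real.exp (α * t) * sobNorm s (duhamel f t) ≤ C * K := by
  obtain ⟨hα0, hα1⟩ := hα
  have hβ : (0:ℝ) < 1 - α := by linarith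
  set β : ℝ := 1 - α with hβdef
  set δ : ℝ := β / 2 with hδdef
  have hδ : 0 < δ := by rw [hδdef]; positivity
  have hsβ : 0 < Real.sqrt β := Real.sqrt_pos.2 hβ
  set C : ℝ := (Real.sqrt β)⁻¹ * (2 + 1/δ) with hCdef
  have hC : 0 < C := by
    have h1 : (0:ℝ) < 1/δ := by positivity
    have h2 : (0:ℝ) < (Real.sqrt β)⁻¹ := by positivity
    rw [hCdef]; nlinarith
  refine ⟨C, hC, ?_⟩
  intro s hs f K hf hzero hsum hbound t ht
  -- the kernel majorant
  set H : ℝ → ℝ :=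
    fun r => (Real.exp (-((α + β/2) * r)) * (Real.sqrt β)⁻¹) * r ^ (-(1/2) : ℝ) with hHdef
  have hH_nonneg : ∀ r : ℝ, 0 ≤ r → 0 ≤ H r := by
    intro r hr
    rw [hHdef]
    exact mul_nonneg (mul_nonneg (Real.exp_pos _).le (by positivity))
      (Real.rpow_nonneg hr _)
  have hK0 : 0 ≤ K := by
    refine le_trans ?_ (hbound 0 le_rfl)
    exact mul_nonneg (Real.exp_pos _).le (Real.sqrt_nonneg _)
  -- integrability of the kernel
  have hHint : IntervalIntegrable (fun τ => H (t - τ)) volume 0 t := by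
    have h1 : IntervalIntegrable (fun x : ℝ => x ^ (-(1/2) : ℝ)) volume 0 t :=
      intervalIntegral.intervalIntegrable_rpow' (by norm_num)
    have h2 : IntervalIntegrable H volume 0 t := by
      rw [hHdef]
      exact h1.continuousOn_mul (Continuous.continuousOn (by fun_prop))
    have h3 := h2.comp_sub_left t
    simpa using h3.symm
  have hgcont : ∀ ξ : Fin d → ℤ, Continuous fun τ => jb ξ ^ (s-1) * cnorm (f τ ξ) :=
    fun ξ => continuous_const.mul (cnorm_comp_continuous hf ξ)
  -- the master integral A
  set A : ℝ := ∫ τ in (0:ℝ)..t, H (t - τ) * Real.exp (-(α * τ)) with hAdef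
  have hAint : IntervalIntegrable (fun τ => H (t - τ) * Real.exp (-(α * τ))) volume 0 t :=
    hHint.mul_continuousOn (Continuous.continuousOn (by fun_prop))
  have hA_nonneg : 0 ≤ A := by
    rw [hAdef]
    refine intervalIntegral.integral_nonneg ht fun τ hτ => ?_
    exact mul_nonneg (hH_nonneg _ (by linarith [hτ.2])) (Real.exp_pos _).le
  have hAbound : A ≤ C * Real.exp (-(α * t)) := by
    have hptw : ∀ τ : ℝ, H (t - τ) * Real.exp (-(α * τ))
        = (Real.exp (-(α*t)) * (Real.sqrt β)⁻¹)
          * (Real.exp (-(δ * (t - τ))) * (t - τ) ^ (-(1/2) : ℝ)) := by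
      intro τ
      have hee : Real.exp (-((α + β/2) * (t - τ))) * Real.exp (-(α * τ))
          = Real.exp (-(α*t)) * Real.exp (-(δ * (t - τ))) := by
        rw [← Real.exp_add, ← Real.exp_add]
        congr 1
        rw [hδdef]; ring
      rw [hHdef]
      calc (Real.exp (-((α + β/2) * (t - τ))) * (Real.sqrt β)⁻¹) * (t - τ) ^ (-(1/2) : ℝ)
            * Real.exp (-(α * τ))
          = (Real.exp (-((α + β/2) * (t - τ))) * Real.exp (-(α * τ)))
            * ((Real.sqrt β)⁻¹ * (t - τ) ^ (-(1/2) : ℝ)) := by ring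
        _ = (Real.exp (-(α*t)) * Real.exp (-(δ * (t - τ))))
            * ((Real.sqrt β)⁻¹ * (t - τ) ^ (-(1/2) : ℝ)) := by rw [hee]
        _ = (Real.exp (-(α*t)) * (Real.sqrt β)⁻¹)
            * (Real.exp (-(δ * (t - τ))) * (t - τ) ^ (-(1/2) : ℝ)) := by ring
    have hsub : (∫ τ in (0:ℝ)..t, Real.exp (-(δ * (t - τ))) * (t - τ) ^ (-(1/2) : ℝ))
        = ∫ r in (0:ℝ)..t, Real.exp (-(δ * r)) * r ^ (-(1/2) : ℝ) := by
      have h := intervalIntegral.integral_comp_sub_left (a := (0:ℝ)) (b := t)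
        (fun r => Real.exp (-(δ * r)) * r ^ (-(1/2) : ℝ)) t
      simpa using h
    have hstep : A = (Real.exp (-(α*t)) * (Real.sqrt β)⁻¹)
        * ∫ r in (0:ℝ)..t, Real.exp (-(δ * r)) * r ^ (-(1/2) : ℝ) := by
      rw [hAdef, ← hsub, ← intervalIntegral.integral_const_mul]
      exact intervalIntegral.integral_congr fun τ _ => hptw τ
    rw [hstep, hCdef]
    calc (Real.exp (-(α*t)) * (Real.sqrt β)⁻¹)
          * ∫ r in (0:ℝ)..t, Real.exp (-(δ * r)) * r ^ (-(1/2) : ℝ)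
        ≤ (Real.exp (-(α*t)) * (Real.sqrt β)⁻¹) * (2 + 1/δ) := by
          exact mul_le_mul_of_nonneg_left (J_bound hδ ht) (by positivity)
      _ = (Real.sqrt β)⁻¹ * (2 + 1/δ) * Real.exp (-(α * t)) := by ring
  -- the per-mode quantity B
  set B : (Fin d → ℤ) → ℝ := fun ξ => ∫ τ in (0:ℝ)..t,
    (H (t - τ) * Real.exp (α * τ)) * (jb ξ ^ (s-1) * cnorm (f τ ξ)) ^ 2 with hBdef
  have hBint : ∀ ξ, IntervalIntegrable
      (fun τ => (H (t - τ) * Real.exp (α * τ)) * (jb ξ ^ (s-1) * cnorm (f τ ξ)) ^ 2)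
      volume 0 t := by
    intro ξ
    have heq : (fun τ => (H (t - τ) * Real.exp (α * τ)) * (jb ξ ^ (s-1) * cnorm (f τ ξ)) ^ 2)
        = fun τ => H (t - τ) * (Real.exp (α * τ) * (jb ξ ^ (s-1) * cnorm (f τ ξ)) ^ 2) := by
      funext τ; ring
    rw [heq]
    refine hHint.mul_continuousOn (Continuous.continuousOn ?_)
    exact (Real.continuous_exp.comp (continuous_const.mul continuous_id)).mul
      ((hgcont ξ).pow 2)
  have hB_nonneg : ∀ ξ, 0 ≤ B ξ := by
    intro ξ
    rw [hBdef]
    refine intervalIntegral.integral_nonneg ht fun τ hτ => ?_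
    exact mul_nonneg (mul_nonneg (hH_nonneg _ (by linarith [hτ.2])) (Real.exp_pos _).le)
      (sq_nonneg _)
  -- per-mode estimate
  have hmode : ∀ ξ : Fin d → ℤ,
      jb ξ ^ (2*s) * cnorm (duhamel f t ξ) ^ 2 ≤ A * B ξ := by
    intro ξ
    by_cases hξ : ξ = 0
    · subst hξ
      have hdz : ∀ j, duhamel f (t) (0 : Fin d → ℤ) j = 0 := by
        intro j
        unfold duhamel
        have hEq : Set.EqOn
            (fun τ => Real.exp (-(t - τ) * latNorm (0 : Fin d → ℤ) ^ 2) • f τ 0 j)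
            (fun _ => (0:ℂ)) (Set.uIcc 0 t) := by
          intro τ hτ
          rw [Set.uIcc_of_le ht] at hτ
          simp [hzero τ hτ.1]
        rw [intervalIntegral.integral_congr hEq, intervalIntegral.integral_zero]
      have hcz : cnorm (duhamel f t (0 : Fin d → ℤ)) = 0 := by
        unfold cnorm
        simp [hdz]
      rw [hcz]
      simpa using mul_nonneg hA_nonneg (hB_nonneg 0)
    · -- nonzero mode
      have hL1 : 1 ≤ latNorm ξ := one_le_latNorm hξ
      have hjb : jb ξ = latNorm ξ := max_eq_right hL1
      have hjb1 : 1 ≤ jb ξ := jb_one_le ξ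
      have hjb0 : 0 < jb ξ := lt_of_lt_of_le one_pos hjb1
      -- Step 1: Minkowski inequality for the Duhamel integral
      set F : ℝ → EuclideanSpace ℂ (Fin n) := fun τ =>
        (WithLp.equiv 2 (Fin n → ℂ)).symm
          (fun j => Real.exp (-(t - τ) * latNorm ξ ^ 2) • f τ ξ j) with hFdef
      have hFcont : Continuous F := by
        refine Continuous.comp ?_ (continuous_pi fun j => ?_)
        · exact (PiLp.continuousLinearEquiv 2 ℂ (fun _ : Fin n => ℂ)).symm.continuous
        · exact ((Real.continuous_exp.comp (by fun_prop)).smul (hf ξ j))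
      have hFint : IntervalIntegrable F volume 0 t := hFcont.intervalIntegrable 0 t
      have hcoord : ∀ j, duhamel f t ξ j = (∫ τ in (0:ℝ)..t, F τ) j := by
        intro j
        have h1 : (∫ τ in (0:ℝ)..t, F τ) j
            = EuclideanSpace.proj j (∫ τ in (0:ℝ)..t, F τ) := rfl
        rw [h1, ← ContinuousLinearMap.intervalIntegral_comp_comm
          (EuclideanSpace.proj j) hFint]
        unfold duhamel
        exact intervalIntegral.integral_congr fun τ _ => rfl
      have hnormF : ∀ τ, ‖F τ‖
          = Real.exp (-(t - τ) * latNorm ξ ^ 2) * cnorm (f τ ξ) := by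
        intro τ
        rw [EuclideanSpace.norm_eq]
        unfold cnorm
        have h1 : ∀ j : Fin n, ‖F τ j‖
            = Real.exp (-(t - τ) * latNorm ξ ^ 2) * ‖f τ ξ j‖ := by
          intro j
          show ‖Real.exp (-(t - τ) * latNorm ξ ^ 2) • f τ ξ j‖ = _
          rw [norm_smul, Real.norm_eq_abs, abs_of_pos (Real.exp_pos _)]
        simp_rw [h1, mul_pow, ← Finset.mul_sum]
        rw [Real.sqrt_mul (sq_nonneg _), Real.sqrt_sq (Real.exp_pos _).le]
      have hmink : cnorm (duhamel f t ξ)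
          ≤ ∫ τ in (0:ℝ)..t, Real.exp (-(t - τ) * latNorm ξ ^ 2) * cnorm (f τ ξ) := by
        have heq : cnorm (duhamel f t ξ) = ‖∫ τ in (0:ℝ)..t, F τ‖ := by
          rw [EuclideanSpace.norm_eq]
          unfold cnorm
          congr 1
          refine Finset.sum_congr rfl fun j _ => ?_
          rw [hcoord j]
        rw [heq]
        calc ‖∫ τ in (0:ℝ)..t, F τ‖ ≤ ∫ τ in (0:ℝ)..t, ‖F τ‖ :=
              intervalIntegral.norm_integral_le_integral_norm ht
          _ = ∫ τ in (0:ℝ)..t, Real.exp (-(t - τ) * latNorm ξ ^ 2) * cnorm (f τ ξ) :=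
              intervalIntegral.integral_congr fun τ _ => hnormF τ
      -- Step 2: smoothing estimate against the kernel H
      have hstepb : jb ξ ^ s * cnorm (duhamel f t ξ)
          ≤ ∫ τ in (0:ℝ)..t, H (t - τ) * (jb ξ ^ (s-1) * cnorm (f τ ξ)) := by
        have h0 : jb ξ ^ s * cnorm (duhamel f t ξ)
            ≤ ∫ τ in (0:ℝ)..t,
              jb ξ ^ s * (Real.exp (-(t - τ) * latNorm ξ ^ 2) * cnorm (f τ ξ)) := by
          rw [intervalIntegral.integral_const_mul]
          exact mul_le_mul_of_nonneg_left hmink (Real.rpow_nonneg (jb_nonneg ξ) s)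
        refine le_trans h0 (intervalIntegral.integral_mono_ae_restrict ht ?_ ?_ ?_)
        · refine Continuous.intervalIntegrable ?_ 0 t
          exact continuous_const.mul
            ((Real.continuous_exp.comp (by fun_prop)).mul (cnorm_comp_continuous hf ξ))
        · exact hHint.mul_continuousOn (hgcont ξ).continuousOn
        · -- a.e. pointwise comparison
          have hne_ae : ∀ᵐ (τ : ℝ) ∂volume, τ ≠ t := by
            have hsing : volume ({t} : Set ℝ) = 0 := measure_singleton t
            rw [MeasureTheory.ae_iff]
            simpa [not_not, Set.setOf_eq_eq_singleton] using hsing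
          filter_upwards [MeasureTheory.ae_restrict_mem measurableSet_Icc,
            MeasureTheory.ae_restrict_of_ae hne_ae] with τ hmem hne
          have hr : 0 < t - τ := lt_of_le_of_ne (by linarith [hmem.2]) (by
            intro hcontra; exact hne (by linarith))
          have hk := kernel_bound hα0 hβ (by rw [hβdef]; ring) hL1 hr
          have hH_eq : H (t - τ) = Real.exp (-((α + β/2) * (t - τ)))
              * ((Real.sqrt β)⁻¹ * (t - τ) ^ (-(1/2) : ℝ)) := by
            rw [hHdef]; ring
          have hk' : latNorm ξ * Real.exp (-(t - τ) * latNorm ξ ^ 2) ≤ H (t - τ) := by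
            rw [hH_eq, show -(t - τ) * latNorm ξ ^ 2 = -((t - τ) * latNorm ξ ^ 2) by ring]
            exact hk
          have hsplit : jb ξ ^ (s-1) * jb ξ = jb ξ ^ s := by
            rw [← Real.rpow_add_one hjb0.ne' (s-1)]
            norm_num
          have hcn : 0 ≤ cnorm (f τ ξ) := cnorm_nonneg _
          calc jb ξ ^ s * (Real.exp (-(t - τ) * latNorm ξ ^ 2) * cnorm (f τ ξ))
              = (jb ξ ^ (s-1) * cnorm (f τ ξ))
                * (latNorm ξ * Real.exp (-(t - τ) * latNorm ξ ^ 2)) := by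
                rw [← hsplit, hjb]; ring
            _ ≤ (jb ξ ^ (s-1) * cnorm (f τ ξ)) * H (t - τ) := by
                refine mul_le_mul_of_nonneg_left hk' ?_
                exact mul_nonneg (Real.rpow_nonneg (jb_nonneg ξ) _) hcn
            _ = H (t - τ) * (jb ξ ^ (s-1) * cnorm (f τ ξ)) := by ring
      -- Step 3: Cauchy–Schwarz
      set φ : ℝ → ℝ := fun τ => Real.sqrt (H (t - τ) * Real.exp (-(α * τ))) with hφdef
      set ψ : ℝ → ℝ := fun τ =>
        Real.sqrt (H (t - τ) * Real.exp (α * τ)) * (jb ξ ^ (s-1) * cnorm (f τ ξ)) with hψdef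
      have hHτ : ∀ τ ∈ Set.uIcc (0:ℝ) t, 0 ≤ H (t - τ) := by
        intro τ hτ
        rw [Set.uIcc_of_le ht] at hτ
        exact hH_nonneg _ (by linarith [hτ.2])
      have he1 : ∀ τ ∈ Set.uIcc (0:ℝ) t,
          φ τ * ψ τ = H (t - τ) * (jb ξ ^ (s-1) * cnorm (f τ ξ)) := by
        intro τ hτ
        have hnn : 0 ≤ H (t - τ) * Real.exp (-(α * τ)) :=
          mul_nonneg (hHτ τ hτ) (Real.exp_pos _).le
        have hee : Real.exp (-(α * τ)) * Real.exp (α * τ) = 1 := by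
          rw [← Real.exp_add]; simp
        rw [hφdef, hψdef]
        show Real.sqrt (H (t - τ) * Real.exp (-(α * τ)))
          * (Real.sqrt (H (t - τ) * Real.exp (α * τ)) * (jb ξ ^ (s-1) * cnorm (f τ ξ))) = _
        rw [← mul_assoc, ← Real.sqrt_mul hnn,
          show (H (t - τ) * Real.exp (-(α * τ))) * (H (t - τ) * Real.exp (α * τ))
            = (H (t - τ)) ^ 2 * (Real.exp (-(α * τ)) * Real.exp (α * τ)) by ring,
          hee, mul_one, Real.sqrt_sq (hHτ τ hτ)]
      have he2 : ∀ τ ∈ Set.uIcc (0:ℝ) t,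
          φ τ ^ 2 = H (t - τ) * Real.exp (-(α * τ)) := by
        intro τ hτ
        rw [hφdef]
        exact Real.sq_sqrt (mul_nonneg (hHτ τ hτ) (Real.exp_pos _).le)
      have he3 : ∀ τ ∈ Set.uIcc (0:ℝ) t,
          ψ τ ^ 2 = (H (t - τ) * Real.exp (α * τ)) * (jb ξ ^ (s-1) * cnorm (f τ ξ)) ^ 2 := by
        intro τ hτ
        rw [hψdef]
        show (Real.sqrt (H (t - τ) * Real.exp (α * τ)) * (jb ξ ^ (s-1) * cnorm (f τ ξ))) ^ 2 = _
        rw [mul_pow, Real.sq_sqrt (mul_nonneg (hHτ τ hτ) (Real.exp_pos _).le)]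
      have hiφψ : IntervalIntegrable (fun τ => φ τ * ψ τ) volume 0 t :=
        intervalIntegrable_congr_uIcc he1 (hHint.mul_continuousOn (hgcont ξ).continuousOn)
      have hiφ : IntervalIntegrable (fun τ => φ τ ^ 2) volume 0 t :=
        intervalIntegrable_congr_uIcc he2 hAint
      have hiψ : IntervalIntegrable (fun τ => ψ τ ^ 2) volume 0 t :=
        intervalIntegrable_congr_uIcc he3 (hBint ξ)
      have hCS := cs_interval ht hiφ hiψ hiφψ
      rw [intervalIntegral.integral_congr he1, intervalIntegral.integral_congr he2,
        intervalIntegral.integral_congr he3] at hCS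
      -- combine
      have hInn : 0 ≤ jb ξ ^ s * cnorm (duhamel f t ξ) :=
        mul_nonneg (Real.rpow_nonneg (jb_nonneg ξ) s) (cnorm_nonneg _)
      have hfinal : (jb ξ ^ s * cnorm (duhamel f t ξ)) ^ 2 ≤ A * B ξ := by
        calc (jb ξ ^ s * cnorm (duhamel f t ξ)) ^ 2
            ≤ (∫ τ in (0:ℝ)..t, H (t - τ) * (jb ξ ^ (s-1) * cnorm (f τ ξ))) ^ 2 :=
              pow_le_pow_left₀ hInn hstepb 2
          _ ≤ A * B ξ := hCS
      calc jb ξ ^ (2*s) * cnorm (duhamel f t ξ) ^ 2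
          = (jb ξ ^ s * cnorm (duhamel f t ξ)) ^ 2 := by
            rw [rpow_two_mul (jb_nonneg ξ) s, mul_pow]
        _ ≤ A * B ξ := hfinal
  -- sum over finite sets of modes
  have hBsum : ∀ Fs : Finset (Fin d → ℤ), (∑ ξ ∈ Fs, B ξ) ≤ K ^ 2 * A := by
    intro Fs
    have h1 : (∑ ξ ∈ Fs, B ξ) = ∫ τ in (0:ℝ)..t,
        ∑ ξ ∈ Fs, (H (t - τ) * Real.exp (α * τ)) * (jb ξ ^ (s-1) * cnorm (f τ ξ)) ^ 2 :=
      (intervalIntegral.integral_finset_sum (fun ξ _ => hBint ξ)).symm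
    rw [h1]
    have h2 : ∀ τ ∈ Set.Icc (0:ℝ) t,
        (∑ ξ ∈ Fs, (H (t - τ) * Real.exp (α * τ)) * (jb ξ ^ (s-1) * cnorm (f τ ξ)) ^ 2)
        ≤ (H (t - τ) * Real.exp (-(α * τ))) * K ^ 2 := by
      intro τ hτ
      have hτ0 : 0 ≤ τ := hτ.1
      have hHnn : 0 ≤ H (t - τ) := hH_nonneg _ (by linarith [hτ.2])
      have hrw : (∑ ξ ∈ Fs, (H (t - τ) * Real.exp (α * τ)) * (jb ξ ^ (s-1) * cnorm (f τ ξ)) ^ 2)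
          = (H (t - τ) * Real.exp (α * τ))
            * ∑ ξ ∈ Fs, jb ξ ^ (2*(s-1)) * cnorm (f τ ξ) ^ 2 := by
        rw [Finset.mul_sum]
        refine Finset.sum_congr rfl fun ξ _ => ?_
        rw [mul_pow, ← rpow_two_mul (jb_nonneg ξ) (s-1)]
      rw [hrw]
      have hsum_le : (∑ ξ ∈ Fs, jb ξ ^ (2*(s-1)) * cnorm (f τ ξ) ^ 2)
          ≤ sobNorm (s-1) (f τ) ^ 2 := by
        have htsum : sobNorm (s-1) (f τ) ^ 2
            = ∑' ξ : Fin d → ℤ, jb ξ ^ (2*(s-1)) * cnorm (f τ ξ) ^ 2 :=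
          Real.sq_sqrt (tsum_nonneg fun ξ =>
            mul_nonneg (Real.rpow_nonneg (jb_nonneg ξ) _) (sq_nonneg _))
        rw [htsum]
        exact Summable.sum_le_tsum Fs (fun ξ _ =>
          mul_nonneg (Real.rpow_nonneg (jb_nonneg ξ) _) (sq_nonneg _)) (hsum τ hτ0)
      have hee : Real.exp (-(α * τ)) * Real.exp (α * τ) = 1 := by
        rw [← Real.exp_add]; simp
      have hsb : sobNorm (s-1) (f τ) ≤ K * Real.exp (-(α * τ)) := by
        have h := hbound τ hτ0
        calc sobNorm (s-1) (f τ)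
            = Real.exp (-(α * τ)) * (Real.exp (α * τ) * sobNorm (s-1) (f τ)) := by
              rw [← mul_assoc, hee, one_mul]
          _ ≤ Real.exp (-(α * τ)) * K :=
              mul_le_mul_of_nonneg_left h (Real.exp_pos _).le
          _ = K * Real.exp (-(α * τ)) := mul_comm _ _
      have hsb2 : sobNorm (s-1) (f τ) ^ 2 ≤ (K * Real.exp (-(α * τ))) ^ 2 :=
        pow_le_pow_left₀ (Real.sqrt_nonneg _) hsb 2
      calc (H (t - τ) * Real.exp (α * τ)) * ∑ ξ ∈ Fs, jb ξ ^ (2*(s-1)) * cnorm (f τ ξ) ^ 2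
          ≤ (H (t - τ) * Real.exp (α * τ)) * (K * Real.exp (-(α * τ))) ^ 2 := by
            refine mul_le_mul_of_nonneg_left (le_trans hsum_le hsb2) ?_
            exact mul_nonneg hHnn (Real.exp_pos _).le
        _ = (H (t - τ) * Real.exp (-(α * τ))) * K ^ 2
            * (Real.exp (-(α * τ)) * Real.exp (α * τ)) := by ring
        _ = (H (t - τ) * Real.exp (-(α * τ))) * K ^ 2 := by rw [hee, mul_one]
    have hint1 : IntervalIntegrable (fun τ =>
        ∑ ξ ∈ Fs, (H (t - τ) * Real.exp (α * τ)) * (jb ξ ^ (s-1) * cnorm (f τ ξ)) ^ 2)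
        volume 0 t :=
      by
        have h := IntervalIntegrable.sum Fs (fun ξ _ => hBint ξ)
        rwa [Finset.sum_fn] at h
    have hint2 : IntervalIntegrable
        (fun τ => (H (t - τ) * Real.exp (-(α * τ))) * K ^ 2) volume 0 t :=
      hAint.mul_const _
    calc (∫ τ in (0:ℝ)..t,
          ∑ ξ ∈ Fs, (H (t - τ) * Real.exp (α * τ)) * (jb ξ ^ (s-1) * cnorm (f τ ξ)) ^ 2)
        ≤ ∫ τ in (0:ℝ)..t, (H (t - τ) * Real.exp (-(α * τ))) * K ^ 2 :=
          intervalIntegral.integral_mono_on ht hint1 hint2 h2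
      _ = K ^ 2 * A := by
          rw [hAdef, ← intervalIntegral.integral_const_mul]
          exact intervalIntegral.integral_congr fun τ _ => by ring
  -- conclude
  have htsum : (∑' ξ : Fin d → ℤ, jb ξ ^ (2*s) * cnorm (duhamel f t ξ) ^ 2)
      ≤ (A * K) ^ 2 := by
    refine tsum_le_of_sum_le' (sq_nonneg _) fun Fs => ?_
    calc (∑ ξ ∈ Fs, jb ξ ^ (2*s) * cnorm (duhamel f t ξ) ^ 2)
        ≤ ∑ ξ ∈ Fs, A * B ξ := Finset.sum_le_sum fun ξ _ => hmode ξ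
      _ = A * ∑ ξ ∈ Fs, B ξ := (Finset.mul_sum _ _ _).symm
      _ ≤ A * (K ^ 2 * A) := mul_le_mul_of_nonneg_left (hBsum Fs) hA_nonneg
      _ = (A * K) ^ 2 := by ring
  have hsob : sobNorm s (duhamel f t) ≤ A * K := by
    have h1 : Real.sqrt (∑' ξ : Fin d → ℤ, jb ξ ^ (2*s) * cnorm (duhamel f t ξ) ^ 2)
        ≤ Real.sqrt ((A * K) ^ 2) := Real.sqrt_le_sqrt htsum
    rw [Real.sqrt_sq (mul_nonneg hA_nonneg hK0)] at h1
    exact h1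
  calc Real.exp (α * t) * sobNorm s (duhamel f t)
      ≤ Real.exp (α * t) * (A * K) :=
        mul_le_mul_of_nonneg_left hsob (Real.exp_pos _).le
    _ ≤ Real.exp (α * t) * ((C * Real.exp (-(α * t))) * K) := by
        refine mul_le_mul_of_nonneg_left
          (mul_le_mul_of_nonneg_right hAbound hK0) (Real.exp_pos _).le
    _ = (Real.exp (α * t) * Real.exp (-(α * t))) * (C * K) := by ring
    _ = C * K := by rw [← Real.exp_add]; simp
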